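/- Let G be a finite nilpotent group such that for every x ∈ G the co-centraliser cc_G(x) equals the set { [x,w] : w ∈ G } (i.e. the set of commutators with x is already a subgroup). Suppose g, h ∈ G satisfy ⟨g⟩^G = ⟨h⟩^G. Then there exist integers r, s and elements v, w ∈ G with g = (h^r)^v and h = (g^s)^w. -/

import Mathlib

/-- The co-centraliser of `x` in `G`: the subgroup generated by all
commutators `[x,w] = x⁻¹ * w⁻¹ * x * w`. -/
def coCentraliser {G : Type*} [Group G] (x : G) : Subgroup G :=
  Subgroup.closure {y | ∃ w : G, y = x⁻¹ * w⁻¹ * x * w}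

section WeakMagnusAux

variable {G : Type*} [Group G]

lemma mem_cc_of_comm (x w : G) : x⁻¹ * w⁻¹ * x * w ∈ coCentraliser x :=
  Subgroup.subset_closure ⟨w, rfl⟩

instance cc_normal (x : G) : (coCentraliser x).Normal := by
  constructor
  intro a ha v
  induction ha using Subgroup.closure_induction with
  | mem a ha =>
      obtain ⟨w, rfl⟩ := ha
      have h1 : (x⁻¹ * (v⁻¹)⁻¹ * x * v⁻¹)⁻¹ * (x⁻¹ * (w * v⁻¹)⁻¹ * x * (w * v⁻¹)) ∈
          coCentraliser x :=
        mul_mem (inv_mem (mem_cc_of_comm x v⁻¹)) (mem_cc_of_comm x (w * v⁻¹))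
      have he : v * (x⁻¹ * w⁻¹ * x * w) * v⁻¹ =
          (x⁻¹ * (v⁻¹)⁻¹ * x * v⁻¹)⁻¹ * (x⁻¹ * (w * v⁻¹)⁻¹ * x * (w * v⁻¹)) := by group
      rw [he]; exact h1
  | one => simpa using (coCentraliser x).one_mem
  | mul a b _ _ iha ihb =>
      have he : v * (a * b) * v⁻¹ = (v * a * v⁻¹) * (v * b * v⁻¹) := by group
      rw [he]; exact mul_mem iha ihb
  | inv a _ iha =>
      have he : v * a⁻¹ * v⁻¹ = (v * a * v⁻¹)⁻¹ := by group
      rw [he]; exact inv_mem iha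

lemma cc_conj_mem (x : G) {a : G} (ha : a ∈ coCentraliser x) (v : G) :
    v⁻¹ * a * v ∈ coCentraliser x := by
  simpa using (cc_normal x).conj_mem a ha v⁻¹

lemma cc_zpow_comm_mem (x v : G) : ∀ k : ℤ, (x ^ k)⁻¹ * v⁻¹ * x ^ k * v ∈ coCentraliser x := by
  have hinv : x * v⁻¹ * x⁻¹ * v ∈ coCentraliser x := by
    have h := (cc_normal x).conj_mem _ (inv_mem (mem_cc_of_comm x v)) x
    have he : x * (x⁻¹ * v⁻¹ * x * v)⁻¹ * x⁻¹ = x * v⁻¹ * x⁻¹ * v := by group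
    rwa [he] at h
  intro k
  induction k using Int.induction_on with
  | zero => simpa using (coCentraliser x).one_mem
  | succ i ih =>
      have he : (x ^ ((i : ℤ) + 1))⁻¹ * v⁻¹ * x ^ ((i : ℤ) + 1) * v =
          (x⁻¹ * ((x ^ (i : ℤ))⁻¹ * v⁻¹ * x ^ (i : ℤ) * v) * x) * (x⁻¹ * v⁻¹ * x * v) := by
        group
      rw [he]
      exact mul_mem (cc_conj_mem x ih x) (mem_cc_of_comm x v)
  | pred i ih =>
      have he : (x ^ (-(i : ℤ) - 1))⁻¹ * v⁻¹ * x ^ (-(i : ℤ) - 1) * v =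
          (x * ((x ^ (-(i : ℤ)))⁻¹ * v⁻¹ * x ^ (-(i : ℤ)) * v) * x⁻¹) *
            (x * v⁻¹ * x⁻¹ * v) := by
        group
      rw [he]
      exact mul_mem (by simpa using cc_conj_mem x ih x⁻¹) hinv

lemma exists_decomp (x : G) {n : G} (hn : n ∈ Subgroup.normalClosure ({x} : Set G)) :
    ∃ (r : ℤ) (c : G), c ∈ coCentraliser x ∧ n = x ^ r * c := by
  rw [show Subgroup.normalClosure ({x} : Set G)
      = Subgroup.closure (Group.conjugatesOfSet {x}) from rfl] at hn
  induction hn using Subgroup.closure_induction with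
  | mem a ha =>
      rw [Group.mem_conjugatesOfSet_iff] at ha
      obtain ⟨b, hb, hconj⟩ := ha
      rw [Set.mem_singleton_iff] at hb
      subst hb
      obtain ⟨u, hu⟩ := isConj_iff.mp hconj
      refine ⟨1, b⁻¹ * (u⁻¹)⁻¹ * b * u⁻¹, mem_cc_of_comm b u⁻¹, ?_⟩
      rw [← hu]; group
  | one => exact ⟨0, 1, (coCentraliser x).one_mem, by group⟩
  | mul a b _ _ iha ihb =>
      obtain ⟨r, c, hc, rfl⟩ := iha
      obtain ⟨s, d, hd, rfl⟩ := ihb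
      refine ⟨r + s, ((x ^ s)⁻¹ * c * x ^ s) * d,
        mul_mem (cc_conj_mem x hc (x ^ s)) hd, ?_⟩
      group
  | inv a _ iha =>
      obtain ⟨r, c, hc, rfl⟩ := iha
      refine ⟨-r, x ^ r * c⁻¹ * (x ^ r)⁻¹, ?_, by group⟩
      simpa using cc_conj_mem x (inv_mem hc) (x ^ r)⁻¹

lemma cc_le_of_decomp (x y : G) (r : ℤ) (c : G) (hc : c ∈ coCentraliser y)
    (hx : x = y ^ r * c) : coCentraliser x ≤ coCentraliser y := by
  apply Subgroup.closure_le _ |>.mpr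
  rintro a ⟨v, rfl⟩
  subst hx
  have he : (y ^ r * c)⁻¹ * v⁻¹ * (y ^ r * c) * v =
      (c⁻¹ * ((y ^ r)⁻¹ * v⁻¹ * y ^ r * v) * c) * (c⁻¹ * (v⁻¹ * c * v)) := by group
  rw [SetLike.mem_coe, he]
  exact mul_mem (cc_conj_mem y (cc_zpow_comm_mem y v r) c)
    (mul_mem (inv_mem hc) (cc_conj_mem y hc v))

open scoped commutatorElement in
lemma half_magnus [Group.IsNilpotent G]
    (hcc : ∀ x : G, (coCentraliser x : Set G) = {y | ∃ w : G, y = x⁻¹ * w⁻¹ * x * w})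
    (g h : G)
    (hncl : Subgroup.normalClosure ({g} : Set G) = Subgroup.normalClosure {h}) :
    ∃ (r : ℤ) (v : G), g = v⁻¹ * h ^ r * v := by
  have hgmem : g ∈ Subgroup.normalClosure ({h} : Set G) :=
    hncl ▸ Subgroup.subset_normalClosure rfl
  have hhmem : h ∈ Subgroup.normalClosure ({g} : Set G) :=
    hncl.symm ▸ Subgroup.subset_normalClosure rfl
  obtain ⟨r, c, hc, hg⟩ := exists_decomp h hgmem
  obtain ⟨s, d, hd, hh⟩ := exists_decomp g hhmem
  have hKgh : coCentraliser g = coCentraliser h :=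
    le_antisymm (cc_le_of_decomp g h r c hc hg) (cc_le_of_decomp h g s d hd hh)
  set C := coCentraliser (h ^ r) with hC
  let φ : G →* G ⧸ C := QuotientGroup.mk' C
  have key : (coCentraliser g).map φ ≤ ⁅(coCentraliser g).map φ, (⊤ : Subgroup (G ⧸ C))⁆ := by
    have hmapcl : (coCentraliser g).map φ
        = Subgroup.closure (φ '' {y | ∃ w : G, y = g⁻¹ * w⁻¹ * g * w}) :=
      MonoidHom.map_closure φ _
    rw [hmapcl, Subgroup.closure_le, ← hmapcl]
    rintro b ⟨a, ⟨v, rfl⟩, rfl⟩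
    have hCmem : c⁻¹ * ((h ^ r)⁻¹ * v⁻¹ * h ^ r * v) * c ∈ C :=
      cc_conj_mem (h ^ r) (mem_cc_of_comm (h ^ r) v) c
    have hid : g⁻¹ * v⁻¹ * g * v =
        (c⁻¹ * ((h ^ r)⁻¹ * v⁻¹ * h ^ r * v) * c) * (c⁻¹ * v⁻¹ * c * v) := by
      rw [hg]; group
    have hone : φ (c⁻¹ * ((h ^ r)⁻¹ * v⁻¹ * h ^ r * v) * c) = 1 := by
      rw [QuotientGroup.mk'_apply, QuotientGroup.eq_one_iff]
      exact hCmem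
    have hφ : φ (g⁻¹ * v⁻¹ * g * v) = ⁅(φ c)⁻¹, (φ v)⁻¹⁆ := by
      rw [hid, map_mul, hone, one_mul, commutatorElement_def]
      simp [map_mul, map_inv]
      group
    rw [SetLike.mem_coe, hφ]
    exact Subgroup.commutator_mem_commutator
      (inv_mem (Subgroup.mem_map_of_mem φ (hKgh.ge hc))) (Subgroup.mem_top _)
  have hlcs : ∀ n, (coCentraliser g).map φ ≤ Subgroup.lowerCentralSeries (⊤ : Subgroup (G ⧸ C)) n := by
    intro n
    induction n with
    | zero => exact le_top
    | succ n ih =>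
        calc (coCentraliser g).map φ
            ≤ ⁅(coCentraliser g).map φ, (⊤ : Subgroup (G ⧸ C))⁆ := key
          _ ≤ ⁅Subgroup.lowerCentralSeries (⊤ : Subgroup (G ⧸ C)) n, (⊤ : Subgroup (G ⧸ C))⁆ :=
              Subgroup.commutator_mono ih le_rfl
          _ = Subgroup.lowerCentralSeries (⊤ : Subgroup (G ⧸ C)) (n + 1) := rfl
  obtain ⟨n, hn⟩ := Subgroup.nilpotent_iff_lowerCentralSeries.mp
    (inferInstance : Group.IsNilpotent (G ⧸ C))
  have hbot : (coCentraliser g).map φ = ⊥ := le_bot_iff.mp (hn ▸ hlcs n)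
  have hle : coCentraliser g ≤ C := by
    rw [Subgroup.map_eq_bot_iff] at hbot
    rwa [QuotientGroup.ker_mk'] at hbot
  have hcC : c ∈ (C : Set G) := hle (hKgh.ge hc)
  rw [hC, hcc (h ^ r)] at hcC
  obtain ⟨w, hw⟩ := hcC
  refine ⟨r, w, ?_⟩
  rw [hg, hw]; group

end WeakMagnusAux

theorem weak_magnus_of_commutator_sets_closed (G : Type*) [Group G]
    [Finite G] [Group.IsNilpotent G]
    (hcc : ∀ x : G, (coCentraliser x : Set G) = {y | ∃ w : G, y = x⁻¹ * w⁻¹ * x * w})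
    (g h : G)
    (hncl : Subgroup.normalClosure ({g} : Set G) = Subgroup.normalClosure {h}) :
    ∃ (r s : ℤ) (v w : G), g = v⁻¹ * h ^ r * v ∧ h = w⁻¹ * g ^ s * w := by
  obtain ⟨r, v, hg⟩ := half_magnus hcc g h hncl
  obtain ⟨s, w, hh⟩ := half_magnus hcc h g hncl.symm
  exact ⟨r, s, v, w, hg, hh⟩
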